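/- Let H be a finite-dimensional complex inner product space, let F = {f_i}_{i=1}^M be a frame for H with frame operator S, and let {q_i}_{i=1}^M be positive weights. With c² = max_i q_i⟨f_i, S⁻¹f_i⟩, Λ₁ = { i : q_i⟨f_i, S⁻¹f_i⟩ = c² }, and H₁ ∩ H₂ = {0} where H_j = span{f_i : i ∈ Λ_j}: if G = {g_i} is any dual of F, written g_i = S⁻¹f_i + u_i, then Re(∑_{i ∈ Λ₁} ⟨f_i, u_i⟩) = 0; consequently either Re⟨f_i,u_i⟩ = 0 for all i ∈ Λ₁, or there exists j ∈ Λ₁ with Re⟨f_j, u_j⟩ > 0, and in the latter case max_{1 ≤ i ≤ M} q_i |⟨f_i, g_i⟩| > c². -/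

import Mathlib

/-- With the notation of the corrected Theorem 1 (frame `F`, frame operator
`S`, positive weights `q`, `c² = max_i q_i ⟨f_i, S⁻¹ f_i⟩`,
`Λ₁ = {i : q_i ⟨f_i, S⁻¹ f_i⟩ = c²}`, `H₁ ⊓ H₂ = {0}` for the spans over `Λ₁` and its
complement): if `G` is any dual of `F`, written `g_i = S⁻¹ f_i + u_i`, then
`Re(∑_{i ∈ Λ₁} ⟨f_i, u_i⟩) = 0`; consequently either `Re⟨f_i, u_i⟩ = 0` for all `i ∈ Λ₁`
or some `j ∈ Λ₁` has `Re⟨f_j, u_j⟩ > 0`, and in the latter case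
`max_i q_i |⟨f_i, g_i⟩| > c²`.  The paper's inner product `⟨a, b⟩` is Mathlib's
`⟪b, a⟫_ℂ`. -/
theorem dual_perturbation_trace_zero_and_strict_increase
    {H : Type*} [NormedAddCommGroup H] [InnerProductSpace ℂ H] [FiniteDimensional ℂ H]
    {M : ℕ} (hM : 0 < M)
    (F : Fin M → H) (hF : Submodule.span ℂ (Set.range F) = ⊤)
    (S : H ≃ₗ[ℂ] H) (hS : ∀ f : H, S f = ∑ i, (inner ℂ (F i) f : ℂ) • F i)
    (q : Fin M → ℝ) (hq : ∀ i, 0 < q i)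
    (c2 : ℝ) (hc2 : c2 = ⨆ i, q i * (inner ℂ (S.symm (F i)) (F i) : ℂ).re)
    (Λ₁ : Finset (Fin M))
    (hΛ₁ : Λ₁ = Finset.univ.filter (fun i => q i * (inner ℂ (S.symm (F i)) (F i) : ℂ).re = c2))
    (hint : Submodule.span ℂ (F '' (Λ₁ : Set (Fin M))) ⊓
            Submodule.span ℂ (F '' ((Λ₁ : Set (Fin M))ᶜ)) = ⊥)
    (G : Fin M → H) (hG : ∀ f : H, ∑ i, (inner ℂ (F i) f : ℂ) • G i = f)
    (u : Fin M → H) (hu : ∀ i, u i = G i - S.symm (F i)) :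
    (∑ i ∈ Λ₁, (inner ℂ (u i) (F i) : ℂ)).re = 0 ∧
    ((∀ i ∈ Λ₁, (inner ℂ (u i) (F i) : ℂ).re = 0) ∨
      ∃ j ∈ Λ₁, 0 < (inner ℂ (u j) (F j) : ℂ).re) ∧
    ((∃ j ∈ Λ₁, 0 < (inner ℂ (u j) (F j) : ℂ).re) →
      c2 < ⨆ i, q i * ‖inner ℂ (G i) (F i)‖) := by
  classical
  -- canonical dual reproduces
  have hSsymm : ∀ f : H, ∑ i, (inner ℂ (F i) f : ℂ) • S.symm (F i) = f := by
    intro f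
    have h1 : S.symm (S f) = f := S.symm_apply_apply f
    rw [hS f, map_sum] at h1
    simpa [map_smul] using h1
  -- T = 0
  have hT : ∀ f : H, ∑ i, (inner ℂ (F i) f : ℂ) • u i = 0 := by
    intro f
    simp only [hu, smul_sub, Finset.sum_sub_distrib, hG, hSsymm, sub_self]
  -- adjoint A = 0
  have hA : ∀ f : H, ∑ i, (inner ℂ (u i) f : ℂ) • F i = 0 := by
    intro f
    have key : ∀ g : H, (inner ℂ g (∑ i, (inner ℂ (u i) f : ℂ) • F i) : ℂ) = 0 := by
      intro g
      have h0 : (inner ℂ (∑ i, (inner ℂ (F i) g : ℂ) • u i) f : ℂ) = 0 := by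
        rw [hT g]; simp
      rw [sum_inner] at h0
      rw [inner_sum]
      rw [← h0]
      apply Finset.sum_congr rfl
      intro i _
      rw [inner_smul_right, inner_smul_left, inner_conj_symm]
      ring
    have := key (∑ i, (inner ℂ (u i) f : ℂ) • F i)
    rwa [inner_self_eq_zero] at this
  -- complementary subspaces
  have hcompl : IsCompl (Submodule.span ℂ (F '' (Λ₁ : Set (Fin M))))
      (Submodule.span ℂ (F '' ((Λ₁ : Set (Fin M))ᶜ))) := by
    constructor
    · rw [disjoint_iff]; exact hint
    · rw [codisjoint_iff, ← Submodule.span_union, ← Set.image_union,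
        Set.union_compl_self, Set.image_univ, hF]
  set H₁ := Submodule.span ℂ (F '' (Λ₁ : Set (Fin M))) with hH₁
  set H₂ := Submodule.span ℂ (F '' ((Λ₁ : Set (Fin M))ᶜ)) with hH₂
  set P : H →ₗ[ℂ] H := H₁.subtype ∘ₗ Submodule.projectionOnto H₁ H₂ hcompl with hP
  have hP1 : ∀ i ∈ Λ₁, P (F i) = F i := by
    intro i hi
    have hmem : F i ∈ H₁ := Submodule.subset_span ⟨i, by simpa using hi, rfl⟩
    simp only [hP, LinearMap.comp_apply]
    rw [show F i = ((⟨F i, hmem⟩ : H₁) : H) from rfl,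
      Submodule.projectionOnto_apply_left hcompl]
    rfl
  have hP2 : ∀ i ∉ Λ₁, P (F i) = 0 := by
    intro i hi
    have hmem : F i ∈ H₂ := Submodule.subset_span ⟨i, by simpa using hi, rfl⟩
    simp only [hP, LinearMap.comp_apply]
    rw [Submodule.projectionOnto_apply_of_mem_right hcompl hmem]
    simp
  -- B = 0
  have hB : ∀ f : H, ∑ i ∈ Λ₁, (inner ℂ (u i) f : ℂ) • F i = 0 := by
    intro f
    have h0 : P (∑ i, (inner ℂ (u i) f : ℂ) • F i) = 0 := by rw [hA f, map_zero]
    rw [map_sum] at h0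
    simp only [map_smul] at h0
    rw [← Finset.sum_add_sum_compl Λ₁] at h0
    have h2 : ∑ i ∈ Λ₁ᶜ, (inner ℂ (u i) f : ℂ) • P (F i) = 0 := by
      apply Finset.sum_eq_zero
      intro i hi
      rw [hP2 i (Finset.mem_compl.mp hi), smul_zero]
    rw [h2, add_zero] at h0
    rw [← h0]
    apply Finset.sum_congr rfl
    intro i hi
    rw [hP1 i hi]
  -- trace over orthonormal basis
  have claim1 : (∑ i ∈ Λ₁, (inner ℂ (u i) (F i) : ℂ)) = 0 := by
    set b := stdOrthonormalBasis ℂ H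
    have expand : ∀ i, (inner ℂ (u i) (F i) : ℂ) =
        ∑ k, (inner ℂ (u i) (b k) : ℂ) * inner ℂ (b k) (F i) := fun i =>
      (b.sum_inner_mul_inner (u i) (F i)).symm
    calc (∑ i ∈ Λ₁, (inner ℂ (u i) (F i) : ℂ))
        = ∑ i ∈ Λ₁, ∑ k, (inner ℂ (u i) (b k) : ℂ) * inner ℂ (b k) (F i) := by
          exact Finset.sum_congr rfl fun i _ => expand i
      _ = ∑ k, ∑ i ∈ Λ₁, (inner ℂ (u i) (b k) : ℂ) * inner ℂ (b k) (F i) :=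
          Finset.sum_comm
      _ = ∑ k, (inner ℂ (b k) (∑ i ∈ Λ₁, (inner ℂ (u i) (b k) : ℂ) • F i) : ℂ) := by
          apply Finset.sum_congr rfl
          intro k _
          rw [inner_sum]
          apply Finset.sum_congr rfl
          intro i _
          rw [inner_smul_right]
      _ = 0 := by
          apply Finset.sum_eq_zero
          intro k _
          rw [hB (b k)]; simp
  have part1 : (∑ i ∈ Λ₁, (inner ℂ (u i) (F i) : ℂ)).re = 0 := by rw [claim1]; rfl
  have part3 : (∃ j ∈ Λ₁, 0 < (inner ℂ (u j) (F j) : ℂ).re) →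
      c2 < ⨆ i, q i * ‖inner ℂ (G i) (F i)‖ := by
    rintro ⟨j, hj, hpos⟩
    have hjc : q j * (inner ℂ (S.symm (F j)) (F j) : ℂ).re = c2 := by
      rw [hΛ₁] at hj; exact (Finset.mem_filter.mp hj).2
    have hGj : G j = S.symm (F j) + u j := by rw [hu j]; abel
    have hre : (inner ℂ (G j) (F j) : ℂ).re =
        (inner ℂ (S.symm (F j)) (F j) : ℂ).re + (inner ℂ (u j) (F j) : ℂ).re := by
      rw [hGj, inner_add_left, Complex.add_re]
    have hlt : c2 < q j * ‖inner ℂ (G j) (F j)‖ := by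
      have h1 : (inner ℂ (G j) (F j) : ℂ).re ≤ ‖inner ℂ (G j) (F j)‖ :=
        Complex.re_le_norm _
      have h2 : q j * (inner ℂ (G j) (F j) : ℂ).re ≤
          q j * ‖inner ℂ (G j) (F j)‖ :=
        mul_le_mul_of_nonneg_left h1 (hq j).le
      have h3 : c2 < q j * (inner ℂ (G j) (F j) : ℂ).re := by
        rw [hre, mul_add, hjc]
        nlinarith [mul_pos (hq j) hpos]
      linarith
    have hsup : q j * ‖inner ℂ (G j) (F j)‖ ≤
        ⨆ i, q i * ‖inner ℂ (G i) (F i)‖ :=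
      le_ciSup (f := fun i => q i * ‖inner ℂ (G i) (F i)‖)
        (Set.Finite.bddAbove (Set.finite_range _)) j
    linarith
  refine ⟨part1, ?_, part3⟩
  by_cases hall : ∀ i ∈ Λ₁, (inner ℂ (u i) (F i) : ℂ).re = 0
  · exact Or.inl hall
  · right
    push_neg at hall
    obtain ⟨j, hj, hjne⟩ := hall
    by_contra hcon
    push_neg at hcon
    have hsum : ∑ i ∈ Λ₁, (inner ℂ (u i) (F i) : ℂ).re = 0 := by
      rw [← Complex.re_sum]; exact part1
    have : ∀ i ∈ Λ₁, (inner ℂ (u i) (F i) : ℂ).re = 0 := by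
      intro i hi
      have := Finset.sum_eq_zero_iff_of_nonpos (fun i hi => hcon i hi) |>.mp hsum i hi
      exact this
    exact hjne (this j hj)
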